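/- Let p > 3 be a prime, n, k integers coprime to p, and χ, ψ Dirichlet characters mod p with χ non-principal and ψ non-principal with ψ² non-principal. Then ∑_{m=1}^{p-1} ψ(m)·|∑_{a=1}^{p-1} χ(m·a + n·ā)·e(k·a/p)|² = (ψ(n·k²)·τ(ψ)·τ(ψ̄)·τ(ψ̄²)/p)·∑_{u=1}^{p-1} χ̄(u)·∑_{a=1}^{p-1} ψ̄(u·a-1)·ψ(u·ā-1)·ψ²(a-1). -/

import Mathlib

open Finset Complex

/-- `e p x = e^{2πi x/p}` for `x : ZMod p`. -/
noncomputable def e (p : ℕ) [NeZero p] (x : ZMod p) : ℂ :=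
  Complex.exp (2 * Real.pi * Complex.I * x.val / p)

/-- Gauss sum `τ(f) = ∑_{a mod p} f(a) e^{2πia/p}` associated to `f : ZMod p → ℂ`. -/
noncomputable def gaussSum' (p : ℕ) [NeZero p] (f : ZMod p → ℂ) : ℂ :=
  ∑ a : ZMod p, f a * e p a

/-- The Legendre symbol character mod `p`, with complex values. -/
noncomputable def legChar (p : ℕ) [Fact p.Prime] : DirichletCharacter ℂ p :=
  (quadraticChar (ZMod p)).ringHomComp (Int.castRingHom ℂ)

section elems
variable (p : ℕ) [NeZero p]

lemma e_eq_pow (x : ZMod p) :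
    e p x = Complex.exp (2 * Real.pi * Complex.I / p) ^ x.val := by
  rw [e, ← Complex.exp_nat_mul]
  congr 1
  ring

lemma e_root_pow : Complex.exp (2 * Real.pi * Complex.I / p) ^ p = 1 := by
  rw [← Complex.exp_nat_mul]
  have hp : (p : ℂ) ≠ 0 := Nat.cast_ne_zero.mpr (NeZero.ne p)
  rw [show (p : ℂ) * (2 * Real.pi * Complex.I / p) = 2 * Real.pi * Complex.I by field_simp]
  exact Complex.exp_two_pi_mul_I

lemma e_zero : e p 0 = 1 := by simp [e]

lemma e_mul (x y : ZMod p) : e p x * e p y = e p (x + y) := by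
  rw [e_eq_pow, e_eq_pow, e_eq_pow, ← pow_add, ZMod.val_add]
  exact pow_eq_pow_mod _ (e_root_pow p)

lemma e_ne_zero (x : ZMod p) : e p x ≠ 0 := Complex.exp_ne_zero _

lemma e_eq_one_iff (x : ZMod p) : e p x = 1 ↔ x = 0 := by
  have hprim : IsPrimitiveRoot (Complex.exp (2 * Real.pi * Complex.I / p)) p :=
    Complex.isPrimitiveRoot_exp p (NeZero.ne p)
  rw [e_eq_pow, hprim.pow_eq_one_iff_dvd]
  constructor
  · intro h
    have hlt := ZMod.val_lt x
    have h0 := Nat.eq_zero_of_dvd_of_lt h hlt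
    exact (ZMod.val_eq_zero x).mp h0
  · rintro rfl; simp

lemma e_conj (x : ZMod p) : (starRingEnd ℂ) (e p x) = e p (-x) := by
  have h1 : e p (-x) * e p x = 1 := by rw [e_mul]; simp [e_zero]
  have h2 : ‖e p x‖ = 1 := by
    rw [e]
    have : (2 * (Real.pi:ℂ) * I * x.val / p) = ((2 * Real.pi * x.val / p : ℝ) : ℂ) * I := by
      push_cast; ring
    rw [this, Complex.norm_exp_ofReal_mul_I]
  have h3 : (starRingEnd ℂ) (e p x) * e p x = 1 := by
    rw [mul_comm, Complex.mul_conj, ← Complex.sq_norm, h2]; norm_num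
  exact mul_right_cancel₀ (e_ne_zero p x) (h3.trans h1.symm)

lemma e_sum_eq_zero (c : ZMod p) (hc : c ≠ 0) : ∑ b : ZMod p, e p (b * c) = 0 := by
  have key : e p c * ∑ b : ZMod p, e p (b * c) = ∑ b : ZMod p, e p (b * c) := by
    rw [Finset.mul_sum]
    rw [← Equiv.sum_comp (Equiv.addRight (1 : ZMod p)) (fun b => e p (b * c))]
    apply Finset.sum_congr rfl
    intro b _
    rw [e_mul]
    congr 1
    simp [add_mul]; ring
  have hne : e p c ≠ 1 := fun h => hc ((e_eq_one_iff p c).mp h)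
  by_contra h
  apply hne
  have h0 : (e p c - 1) * ∑ b : ZMod p, e p (b * c) = 0 := by linear_combination key
  rcases mul_eq_zero.mp h0 with h1 | h1
  · linear_combination h1
  · exact absurd h1 h

lemma e_sum_eq_ite (c : ZMod p) : ∑ b : ZMod p, e p (b * c) = if c = 0 then (p : ℂ) else 0 := by
  split_ifs with h
  · subst h; simp [e_zero]
  · exact e_sum_eq_zero p c h
end elems

section chars
variable {p : ℕ} [Fact p.Prime] (ν : DirichletCharacter ℂ p)

lemma char_conj (a : ZMod p) : (starRingEnd ℂ) (ν a) = ν⁻¹ a := by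
  rw [← MulChar.star_apply' ν a, starRingEnd_apply]

lemma char_conj' (a : ZMod p) : (starRingEnd ℂ) (ν a) = ν a⁻¹ := by
  rw [char_conj, MulChar.inv_apply' ]

lemma char_mul_conj {a : ZMod p} (ha : a ≠ 0) : ν a * (starRingEnd ℂ) (ν a) = 1 := by
  rw [char_conj', ← map_mul, mul_inv_cancel₀ ha, map_one]

lemma char_sum_eq_zero (hν : ν ≠ 1) :
    ∑ x ∈ univ.filter (fun x : ZMod p => x ≠ 0), ν x = 0 := by
  rw [Finset.sum_filter_of_ne (fun x _ hx => ?_), MulChar.sum_eq_zero_of_ne_one hν]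
  intro h0
  rw [h0, MulChar.map_zero] at hx
  exact hx rfl

lemma char_twisted_gauss (hν : ν ≠ 1) (l : ZMod p) :
    ∑ a : ZMod p, ν a * e p (l * a) = ν⁻¹ l * gaussSum' p ν := by
  rcases eq_or_ne l 0 with rfl | hl
  · rw [MulChar.inv_apply', inv_zero, MulChar.map_zero, zero_mul]
    simp only [zero_mul, e_zero, mul_one]
    exact MulChar.sum_eq_zero_of_ne_one hν
  · rw [gaussSum', Finset.mul_sum]
    rw [← Equiv.sum_comp (Equiv.mulLeft₀ l⁻¹ (inv_ne_zero hl)) (fun a => ν a * e p (l * a))]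
    apply Finset.sum_congr rfl
    intro a _
    simp only [Equiv.mulLeft₀_apply]
    rw [map_mul, MulChar.inv_apply']
    rw [show l * (l⁻¹ * a) = a by field_simp]
    ring

lemma char_gauss_mul (hν : ν ≠ 1) :
    gaussSum' p ν * gaussSum' p (fun a => (starRingEnd ℂ) (ν a)) = ν (-1) * p := by
  have hstep : gaussSum' p ν * gaussSum' p (fun a => (starRingEnd ℂ) (ν a))
      = ∑ b ∈ univ.filter (fun b : ZMod p => b ≠ 0),
          ∑ t : ZMod p, ν t * e p (b * (t + 1)) := by
    rw [gaussSum', gaussSum', mul_comm, Finset.sum_mul]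
    rw [← Finset.sum_filter_of_ne (p := fun b : ZMod p => b ≠ 0) (fun x _ hx => ?_)]
    swap
    · intro h0; rw [h0] at hx; simp at hx; exact hx.1.1 (MulChar.map_zero ν)
    apply Finset.sum_congr rfl
    intro b hb
    rw [mem_filter] at hb
    obtain ⟨-, hb⟩ := hb
    rw [Finset.mul_sum]
    rw [← Equiv.sum_comp (Equiv.mulRight₀ b hb)
      (fun a => (starRingEnd ℂ) (ν b) * e p b * (ν a * e p a))]
    apply Finset.sum_congr rfl
    intro t _
    simp only [Equiv.mulRight₀_apply]
    rw [map_mul]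
    have : (starRingEnd ℂ) (ν b) * e p b * (ν t * ν b * e p (t * b))
        = ν t * ((ν b * (starRingEnd ℂ) (ν b)) * (e p (t * b) * e p b)) := by ring
    rw [this, char_mul_conj ν hb, e_mul, one_mul]
    congr 1
    ring
  rw [hstep, Finset.sum_comm]
  have : ∀ t : ZMod p, ∑ b ∈ univ.filter (fun b : ZMod p => b ≠ 0), ν t * e p (b * (t + 1))
      = ν t * ((if t = -1 then (p:ℂ) else 0) - 1) := by
    intro t
    rw [← Finset.mul_sum]
    congr 1
    have hsplit : ∑ b : ZMod p, e p (b * (t + 1))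
        = e p (0 * (t+1)) + ∑ b ∈ univ.filter (fun b : ZMod p => b ≠ 0), e p (b * (t + 1)) := by
      rw [Finset.filter_ne']
      exact (Finset.add_sum_erase univ (fun b => e p (b * (t+1))) (mem_univ 0)).symm
    have h2 := e_sum_eq_ite p (t + 1)
    rw [hsplit] at h2
    rw [zero_mul, e_zero] at h2
    have : (if t + 1 = 0 then (p:ℂ) else 0) = (if t = -1 then (p:ℂ) else 0) := by
      congr 1
      simp [add_eq_zero_iff_eq_neg]
    rw [← this]
    linear_combination h2
  rw [Finset.sum_congr rfl (fun t _ => this t)]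
  have expand : ∀ t : ZMod p, ν t * ((if t = -1 then (p:ℂ) else 0) - 1)
      = (if t = -1 then ν t * p else 0) - ν t := by
    intro t; split_ifs <;> ring
  rw [Finset.sum_congr rfl (fun t _ => expand t), Finset.sum_sub_distrib]
  rw [Finset.sum_ite_eq' univ (-1 : ZMod p) (fun t => ν t * p)]
  rw [MulChar.sum_eq_zero_of_ne_one hν]
  simp

end chars

section main
variable {p : ℕ} [Fact p.Prime]

lemma char_conj_inv (ν : DirichletCharacter ℂ p) (x : ZMod p) :
    (starRingEnd ℂ) (ν x⁻¹) = ν x := by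
  rw [char_conj', inv_inv]

lemma char_neg_one_sq (ν : DirichletCharacter ℂ p) : ν (-1) * ν (-1) = 1 := by
  rw [← map_mul, neg_mul_neg, one_mul, map_one]

lemma char_conj_neg_one (ν : DirichletCharacter ℂ p) :
    (starRingEnd ℂ) (ν (-1)) = ν (-1) := by
  rw [char_conj', inv_neg_one]

lemma conj_char_sum_eq_zero (ν : DirichletCharacter ℂ p) (hν : ν ≠ 1) :
    ∑ x ∈ univ.filter (fun x : ZMod p => x ≠ 0), (starRingEnd ℂ) (ν x) = 0 := by
  have h : ∀ x : ZMod p, (starRingEnd ℂ) (ν x) = ν⁻¹ x := char_conj ν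
  rw [Finset.sum_congr rfl (fun x _ => h x)]
  exact char_sum_eq_zero _ (fun hc => hν (inv_eq_one.mp hc))

lemma lemB_main (χ ψ : DirichletCharacter ℂ p) {a : ZMod p} (ha : a ≠ 0) (ha2 : a * a ≠ 1) :
    ∑ m ∈ univ.filter (fun m : ZMod p => m ≠ 0),
        ψ m * (χ (m * a + 1) * (starRingEnd ℂ) (χ (m + a)))
    = ψ (-1) * ∑ u ∈ univ.filter (fun u : ZMod p => u ≠ 0),
        (starRingEnd ℂ) (χ u) * ((starRingEnd ℂ) (ψ (u * a - 1)) * ψ (u - a)) := by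
  have hfact : (a - 1) * (a + 1) = a * a - 1 := by ring
  have ha2' : a * a - 1 ≠ 0 := fun h => ha2 (by linear_combination (h : a*a-1 = 0))
  set D : Finset (ZMod p) :=
    univ.filter (fun m : ZMod p => m ≠ 0 ∧ m * a + 1 ≠ 0 ∧ m + a ≠ 0) with hD
  set E : Finset (ZMod p) :=
    univ.filter (fun u : ZMod p => u ≠ 0 ∧ u * a - 1 ≠ 0 ∧ u ≠ a) with hE
  have hLHS : ∑ m ∈ univ.filter (fun m : ZMod p => m ≠ 0),
      ψ m * (χ (m * a + 1) * (starRingEnd ℂ) (χ (m + a)))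
      = ∑ m ∈ D, ψ m * (χ (m * a + 1) * (starRingEnd ℂ) (χ (m + a))) := by
    apply (Finset.sum_subset ?_ ?_).symm
    · intro m hm
      rw [hD, mem_filter] at hm
      rw [mem_filter]
      exact ⟨mem_univ m, hm.2.1⟩
    · intro m hm hnm
      rw [mem_filter] at hm
      rw [hD, mem_filter] at hnm
      push_neg at hnm
      rcases eq_or_ne (m * a + 1) 0 with h1 | h1
      · rw [h1, MulChar.map_zero]; ring
      rcases eq_or_ne (m + a) 0 with h2 | h2
      · rw [h2, MulChar.map_zero, map_zero]; ring
      · exact absurd (hnm (mem_univ m) hm.2 h1) h2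
  have hRHS : ∑ u ∈ univ.filter (fun u : ZMod p => u ≠ 0),
      (starRingEnd ℂ) (χ u) * ((starRingEnd ℂ) (ψ (u * a - 1)) * ψ (u - a))
      = ∑ u ∈ E, (starRingEnd ℂ) (χ u) * ((starRingEnd ℂ) (ψ (u * a - 1)) * ψ (u - a)) := by
    apply (Finset.sum_subset ?_ ?_).symm
    · intro u hu
      rw [hE, mem_filter] at hu
      rw [mem_filter]
      exact ⟨mem_univ u, hu.2.1⟩
    · intro u hu hnu
      rw [mem_filter] at hu
      rw [hE, mem_filter] at hnu
      push_neg at hnu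
      rcases eq_or_ne (u * a - 1) 0 with h1 | h1
      · rw [h1, MulChar.map_zero, map_zero]; ring
      rcases eq_or_ne u a with h2 | h2
      · rw [h2, sub_self, MulChar.map_zero]; ring
      · exact absurd (hnu (mem_univ u) hu.2 h1) h2
  rw [hLHS, hRHS, Finset.mul_sum]
  apply Finset.sum_nbij' (i := fun m => (m + a) * (m * a + 1)⁻¹)
    (j := fun u => (a - u) * (u * a - 1)⁻¹)
  · -- hi : maps D to E
    intro m hm
    rw [hD, mem_filter] at hm
    obtain ⟨-, hm0, ht, hs⟩ := hm
    rw [hE, mem_filter]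
    refine ⟨mem_univ _, ?_, ?_, ?_⟩
    · exact mul_ne_zero hs (inv_ne_zero ht)
    · rw [show (m + a) * (m * a + 1)⁻¹ * a - 1 = (a * a - 1) * (m * a + 1)⁻¹ by
        field_simp; ring]
      exact mul_ne_zero ha2' (inv_ne_zero ht)
    · intro h
      have : (m + a) * (m * a + 1)⁻¹ - a = 0 := by rw [h]; ring
      rw [show (m + a) * (m * a + 1)⁻¹ - a = m * (1 - a * a) * (m * a + 1)⁻¹ by
        field_simp; ring] at this
      rcases mul_eq_zero.mp this with h' | h'
      · rcases mul_eq_zero.mp h' with h'' | h''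
        · exact hm0 h''
        · exact ha2' (by linear_combination -h'')
      · exact inv_ne_zero ht h'
  · -- hj : maps E to D
    intro u hu
    rw [hE, mem_filter] at hu
    obtain ⟨-, hu0, ht, hs⟩ := hu
    rw [hD, mem_filter]
    refine ⟨mem_univ _, ?_, ?_, ?_⟩
    · exact mul_ne_zero (sub_ne_zero.mpr (fun h => hs h.symm)) (inv_ne_zero ht)
    · rw [show (a - u) * (u * a - 1)⁻¹ * a + 1 = (a * a - 1) * (u * a - 1)⁻¹ by
        linear_combination (-1 : ZMod p) * mul_inv_cancel₀ ht]
      exact mul_ne_zero ha2' (inv_ne_zero ht)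
    · rw [show (a - u) * (u * a - 1)⁻¹ + a = u * (a * a - 1) * (u * a - 1)⁻¹ by
        linear_combination (-a) * mul_inv_cancel₀ ht]
      exact mul_ne_zero (mul_ne_zero hu0 ha2') (inv_ne_zero ht)
  · -- left_inv
    intro m hm
    rw [hD, mem_filter] at hm
    obtain ⟨-, hm0, ht, hs⟩ := hm
    have key : (m + a) * (m * a + 1)⁻¹ * a - 1 = (a * a - 1) * (m * a + 1)⁻¹ := by
      field_simp; ring
    rw [key]
    rw [mul_inv, inv_inv]
    linear_combination (-(m + a) * (a * a - 1)⁻¹) * mul_inv_cancel₀ ht + m * mul_inv_cancel₀ ha2'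
  · -- right_inv
    intro u hu
    rw [hE, mem_filter] at hu
    obtain ⟨-, hu0, ht, hs⟩ := hu
    have key : (a - u) * (u * a - 1)⁻¹ * a + 1 = (a * a - 1) * (u * a - 1)⁻¹ := by
      linear_combination (-1 : ZMod p) * mul_inv_cancel₀ ht
    rw [key]
    rw [mul_inv, inv_inv]
    linear_combination ((a - u) * (a * a - 1)⁻¹) * mul_inv_cancel₀ ht + u * mul_inv_cancel₀ ha2'
  · -- term equality
    intro m hm
    rw [hD, mem_filter] at hm
    obtain ⟨-, hm0, ht, hs⟩ := hm
    have h1 : (m + a) * (m * a + 1)⁻¹ * a - 1 = (a * a - 1) * (m * a + 1)⁻¹ := by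
      field_simp; ring
    have h2 : (m + a) * (m * a + 1)⁻¹ - a = m * (1 - a * a) * (m * a + 1)⁻¹ := by
      field_simp; ring
    rw [h1, h2]
    have c1 : (starRingEnd ℂ) (χ ((m + a) * (m * a + 1)⁻¹))
        = (starRingEnd ℂ) (χ (m + a)) * χ (m * a + 1) := by
      rw [map_mul χ, map_mul (starRingEnd ℂ), char_conj_inv]
    have c2 : (starRingEnd ℂ) (ψ ((a * a - 1) * (m * a + 1)⁻¹))
        = (starRingEnd ℂ) (ψ (a * a - 1)) * ψ (m * a + 1) := by
      rw [map_mul ψ, map_mul (starRingEnd ℂ), char_conj_inv]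
    have c3 : ψ (m * (1 - a * a) * (m * a + 1)⁻¹)
        = ψ m * (ψ (-1) * ψ (a * a - 1)) * ψ ((m * a + 1)⁻¹) := by
      rw [show m * (1 - a * a) = m * ((-1) * (a * a - 1)) by ring, map_mul ψ, map_mul ψ,
        map_mul ψ]
    have c4 : ψ (m * a + 1) * ψ ((m * a + 1)⁻¹) = 1 := by
      rw [← map_mul, mul_inv_cancel₀ ht, map_one]
    have c5 : ψ (a * a - 1) * (starRingEnd ℂ) (ψ (a * a - 1)) = 1 := char_mul_conj ψ ha2'
    have c6 := char_neg_one_sq ψ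
    rw [c1, c2, c3]
    have hre : ψ (-1) * (((starRingEnd ℂ) (χ (m + a)) * χ (m * a + 1)) *
          (((starRingEnd ℂ) (ψ (a * a - 1)) * ψ (m * a + 1)) *
            (ψ m * (ψ (-1) * ψ (a * a - 1)) * ψ ((m * a + 1)⁻¹))))
        = ((ψ (-1) * ψ (-1)) * (ψ (a * a - 1) * (starRingEnd ℂ) (ψ (a * a - 1))) *
            (ψ (m * a + 1) * ψ ((m * a + 1)⁻¹))) *
            (ψ m * (χ (m * a + 1) * (starRingEnd ℂ) (χ (m + a)))) := by ring
    rw [hre, c4, c5, c6]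
    ring

lemma neg_one_ne_zero' (hp : 3 < p) : (-1 : ZMod p) ≠ 0 := by
  simp only [ne_eq, neg_eq_zero]
  exact one_ne_zero

lemma neg_one_ne_one' (hp : 3 < p) : (-1 : ZMod p) ≠ 1 := by
  intro h
  have h2 : ((2 : ℕ) : ZMod p) = 0 := by push_cast; linear_combination -h
  rw [ZMod.natCast_eq_zero_iff] at h2
  have := Nat.le_of_dvd (by norm_num) h2
  omega

lemma lemB (χ ψ : DirichletCharacter ℂ p) (hχ : χ ≠ 1) (hψ : ψ ≠ 1) (hp : 3 < p)
    {a : ZMod p} (ha : a ≠ 0) :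
    ∑ m ∈ univ.filter (fun m : ZMod p => m ≠ 0),
        ψ m * (χ (m * a + 1) * (starRingEnd ℂ) (χ (m + a)))
    = ψ (-1) * ∑ u ∈ univ.filter (fun u : ZMod p => u ≠ 0),
        (starRingEnd ℂ) (χ u) * ((starRingEnd ℂ) (ψ (u * a - 1)) * ψ (u - a)) := by
  by_cases ha2 : a * a = 1
  · have hfac : (a - 1) * (a + 1) = 0 := by linear_combination ha2
    have hone : (1 : ZMod p) ∈ univ.filter (fun x : ZMod p => x ≠ 0) := by
      simp [mem_filter]
    have hnegone : (-1 : ZMod p) ∈ univ.filter (fun x : ZMod p => x ≠ 0) := by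
      simp only [mem_filter, mem_univ, true_and]
      exact neg_one_ne_zero' hp
    rcases mul_eq_zero.mp hfac with h1 | h1
    · -- a = 1
      have haa : a = 1 := by linear_combination h1
      subst haa
      have hL : ∑ m ∈ univ.filter (fun m : ZMod p => m ≠ 0),
          ψ m * (χ (m * 1 + 1) * (starRingEnd ℂ) (χ (m + 1))) = - ψ (-1) := by
        rw [← Finset.add_sum_erase _ _ hnegone]
        have hterm : ψ (-1 : ZMod p) * (χ ((-1) * 1 + 1) * (starRingEnd ℂ) (χ ((-1) + 1))) = 0 := by
          rw [show ((-1 : ZMod p)) * 1 + 1 = 0 by ring, MulChar.map_zero]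
          ring
        rw [hterm, zero_add]
        have : ∀ m ∈ (univ.filter (fun m : ZMod p => m ≠ 0)).erase (-1),
            ψ m * (χ (m * 1 + 1) * (starRingEnd ℂ) (χ (m + 1))) = ψ m := by
          intro m hm
          rw [mem_erase, mem_filter] at hm
          have hm1 : m + 1 ≠ 0 := fun h => hm.1 (by linear_combination h)
          rw [show m * 1 + 1 = m + 1 by ring, char_mul_conj χ hm1, mul_one]
        rw [Finset.sum_congr rfl this, Finset.sum_erase_eq_sub hnegone,
          char_sum_eq_zero ψ hψ, zero_sub]
      have hR : ∑ u ∈ univ.filter (fun u : ZMod p => u ≠ 0),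
          (starRingEnd ℂ) (χ u) * ((starRingEnd ℂ) (ψ (u * 1 - 1)) * ψ (u - 1)) = -1 := by
        rw [← Finset.add_sum_erase _ _ hone]
        have hterm : (starRingEnd ℂ) (χ (1 : ZMod p)) *
            ((starRingEnd ℂ) (ψ (1 * 1 - 1)) * ψ (1 - 1)) = 0 := by
          rw [show ((1 : ZMod p)) - 1 = 0 by ring, MulChar.map_zero]
          ring
        rw [hterm, zero_add]
        have : ∀ u ∈ (univ.filter (fun u : ZMod p => u ≠ 0)).erase 1,
            (starRingEnd ℂ) (χ u) * ((starRingEnd ℂ) (ψ (u * 1 - 1)) * ψ (u - 1))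
            = (starRingEnd ℂ) (χ u) := by
          intro u hu
          rw [mem_erase, mem_filter] at hu
          have hu1 : u - 1 ≠ 0 := fun h => hu.1 (by linear_combination h)
          rw [show u * 1 - 1 = u - 1 by ring, mul_comm ((starRingEnd ℂ) (ψ (u - 1))),
            char_mul_conj ψ hu1, mul_one]
        rw [Finset.sum_congr rfl this, Finset.sum_erase_eq_sub hone,
          conj_char_sum_eq_zero χ hχ, zero_sub]
        rw [map_one, map_one]
      rw [hL, hR]
      ring
    · -- a = -1
      have haa : a = -1 := by linear_combination h1
      subst haa
      have hL : ∑ m ∈ univ.filter (fun m : ZMod p => m ≠ 0),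
          ψ m * (χ (m * (-1) + 1) * (starRingEnd ℂ) (χ (m + (-1)))) = - χ (-1) := by
        rw [← Finset.add_sum_erase _ _ hone]
        have hterm : ψ (1 : ZMod p) * (χ ((1:ZMod p) * (-1) + 1) *
            (starRingEnd ℂ) (χ ((1:ZMod p) + (-1)))) = 0 := by
          rw [show ((1:ZMod p)) * (-1) + 1 = 0 by ring, MulChar.map_zero]
          ring
        rw [hterm, zero_add]
        have : ∀ m ∈ (univ.filter (fun m : ZMod p => m ≠ 0)).erase 1,
            ψ m * (χ (m * (-1) + 1) * (starRingEnd ℂ) (χ (m + (-1)))) = χ (-1) * ψ m := by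
          intro m hm
          rw [mem_erase, mem_filter] at hm
          have hm1 : m - 1 ≠ 0 := sub_ne_zero.mpr hm.1
          rw [show m * (-1) + 1 = (-1) * (m - 1) by ring, show m + (-1) = m - 1 by ring,
            map_mul χ, mul_assoc, char_mul_conj χ hm1, mul_one]
          ring
        rw [Finset.sum_congr rfl this, ← Finset.mul_sum, Finset.sum_erase_eq_sub hone,
          char_sum_eq_zero ψ hψ, zero_sub, map_one]
        ring
      have hR : ∑ u ∈ univ.filter (fun u : ZMod p => u ≠ 0),
          (starRingEnd ℂ) (χ u) * ((starRingEnd ℂ) (ψ (u * (-1) - 1)) * ψ (u - (-1)))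
          = - (ψ (-1) * χ (-1)) := by
        rw [← Finset.add_sum_erase _ _ hnegone]
        have hterm : (starRingEnd ℂ) (χ (-1 : ZMod p)) *
            ((starRingEnd ℂ) (ψ ((-1:ZMod p) * (-1) - 1)) * ψ ((-1:ZMod p) - (-1))) = 0 := by
          rw [show ((-1:ZMod p)) - (-1) = 0 by ring, MulChar.map_zero]
          ring
        rw [hterm, zero_add]
        have : ∀ u ∈ (univ.filter (fun u : ZMod p => u ≠ 0)).erase (-1),
            (starRingEnd ℂ) (χ u) * ((starRingEnd ℂ) (ψ (u * (-1) - 1)) * ψ (u - (-1)))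
            = ψ (-1) * (starRingEnd ℂ) (χ u) := by
          intro u hu
          rw [mem_erase, mem_filter] at hu
          have hu1 : u + 1 ≠ 0 := fun h => hu.1 (by linear_combination h)
          rw [show u * (-1) - 1 = (-1) * (u + 1) by ring, show u - (-1) = u + 1 by ring,
            map_mul ψ, map_mul (starRingEnd ℂ), char_conj_neg_one]
          have : (starRingEnd ℂ) (ψ (u + 1)) * ψ (u + 1) = 1 := by
            rw [mul_comm]; exact char_mul_conj ψ hu1
          calc (starRingEnd ℂ) (χ u) * (ψ (-1) * (starRingEnd ℂ) (ψ (u + 1)) * ψ (u + 1))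
              = ψ (-1) * (starRingEnd ℂ) (χ u) * ((starRingEnd ℂ) (ψ (u + 1)) * ψ (u + 1)) := by
                ring
            _ = ψ (-1) * (starRingEnd ℂ) (χ u) := by rw [this, mul_one]
        rw [Finset.sum_congr rfl this, ← Finset.mul_sum, Finset.sum_erase_eq_sub hnegone,
          conj_char_sum_eq_zero χ hχ, zero_sub, char_conj_neg_one]
        ring
      rw [hL, hR]
      have := char_neg_one_sq ψ
      calc -χ (-1) = (ψ (-1) * ψ (-1)) * (-χ (-1)) := by rw [this]; ring
        _ = ψ (-1) * -(ψ (-1) * χ (-1)) := by ring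
  · exact lemB_main χ ψ ha ha2


lemma sum_A_mul (c : ZMod p) (hc : c ≠ 0) (f : ZMod p → ℂ) :
    ∑ x ∈ univ.filter (fun x : ZMod p => x ≠ 0), f (c * x)
    = ∑ x ∈ univ.filter (fun x : ZMod p => x ≠ 0), f x := by
  apply Finset.sum_nbij' (i := fun x => c * x) (j := fun y => c⁻¹ * y)
  · intro x hx
    rw [mem_filter] at hx ⊢
    exact ⟨mem_univ _, mul_ne_zero hc hx.2⟩
  · intro y hy
    rw [mem_filter] at hy ⊢
    exact ⟨mem_univ _, mul_ne_zero (inv_ne_zero hc) hy.2⟩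
  · intro x _; field_simp
  · intro y _; field_simp
  · intro x _; rfl

lemma sum_A_inv (f : ZMod p → ℂ) :
    ∑ x ∈ univ.filter (fun x : ZMod p => x ≠ 0), f x⁻¹
    = ∑ x ∈ univ.filter (fun x : ZMod p => x ≠ 0), f x := by
  apply Finset.sum_nbij' (i := fun x => x⁻¹) (j := fun y => y⁻¹)
  · intro x hx
    rw [mem_filter] at hx ⊢
    exact ⟨mem_univ _, inv_ne_zero hx.2⟩
  · intro y hy
    rw [mem_filter] at hy ⊢
    exact ⟨mem_univ _, inv_ne_zero hy.2⟩
  · intro x _; simp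
  · intro y _; simp
  · intro x _; rfl


lemma psi_negone_sq (ψ : DirichletCharacter ℂ p) : ψ (-1) ^ 2 = 1 := by
  rw [sq]; exact char_neg_one_sq ψ

lemma inner_gauss (ψ : DirichletCharacter ℂ p) (hψ2 : ψ ^ 2 ≠ 1) (l : ZMod p) :
    ∑ a ∈ univ.filter (fun a : ZMod p => a ≠ 0),
      ((starRingEnd ℂ) (ψ a) * (starRingEnd ℂ) (ψ a)) * e p (l * a)
    = ψ l ^ 2 * gaussSum' p (fun a => (starRingEnd ℂ) (ψ a) ^ 2) := by
  set ν₂ : DirichletCharacter ℂ p := ψ⁻¹ ^ 2 with hν₂def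
  have hν₂ : ν₂ ≠ 1 := by
    rw [hν₂def, inv_pow, ne_eq, inv_eq_one]
    exact hψ2
  have hpt : ∀ a : ZMod p, ν₂ a = (starRingEnd ℂ) (ψ a) * (starRingEnd ℂ) (ψ a) := by
    intro a
    rw [hν₂def, MulChar.pow_apply' _ two_ne_zero, sq, char_conj]
  have hfil : ∑ a ∈ univ.filter (fun a : ZMod p => a ≠ 0),
      ((starRingEnd ℂ) (ψ a) * (starRingEnd ℂ) (ψ a)) * e p (l * a)
      = ∑ a : ZMod p, ν₂ a * e p (l * a) := by
    rw [Finset.sum_filter_of_ne (fun x _ hx => ?_)]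
    · exact Finset.sum_congr rfl (fun a _ => by rw [hpt])
    · intro h0
      rw [h0] at hx
      simp only [MulChar.map_zero, map_zero, zero_mul, mul_zero] at hx
      exact hx rfl
  rw [hfil, char_twisted_gauss ν₂ hν₂ l]
  congr 1
  · rw [hν₂def, inv_pow, inv_inv, MulChar.pow_apply' _ two_ne_zero]
  · rw [gaussSum', gaussSum']
    exact Finset.sum_congr rfl (fun a _ => by rw [hpt, char_conj, sq])

theorem stmt_13' (hp : 3 < p) (n k : ℤ)
    (hn : IsCoprime n (p : ℤ)) (hk : IsCoprime k (p : ℤ))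
    (χ ψ : DirichletCharacter ℂ p) (hχ : χ ≠ 1) (hψ : ψ ≠ 1) (hψ2 : ψ ^ 2 ≠ 1) :
    ∑ m ∈ univ.filter (fun m : ZMod p => m ≠ 0),
      ψ m * ‖∑ a ∈ univ.filter (fun a : ZMod p => a ≠ 0),
        χ ((m : ZMod p) * a + (n : ZMod p) * a⁻¹) * e p ((k : ZMod p) * a)‖ ^ 2
      = ψ ((n * k ^ 2 : ℤ) : ZMod p) * gaussSum' p ψ
          * gaussSum' p (fun a => (starRingEnd ℂ) (ψ a))
          * gaussSum' p (fun a => (starRingEnd ℂ) (ψ a) ^ 2) / p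
          * ∑ u ∈ univ.filter (fun u : ZMod p => u ≠ 0),
              (starRingEnd ℂ) (χ u) *
                ∑ a ∈ univ.filter (fun a : ZMod p => a ≠ 0),
                  (starRingEnd ℂ) (ψ (u * a - 1)) * ψ (u * a⁻¹ - 1) * ψ (a - 1) ^ 2 := by
  classical
  have hN : (n : ZMod p) ≠ 0 := by
    have h := hn.map (Int.castRingHom (ZMod p))
    simp only [Int.coe_castRingHom, Int.cast_natCast, ZMod.natCast_self] at h
    exact (isCoprime_zero_right.mp h).ne_zero
  have hK : (k : ZMod p) ≠ 0 := by
    have h := hk.map (Int.castRingHom (ZMod p))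
    simp only [Int.coe_castRingHom, Int.cast_natCast, ZMod.natCast_self] at h
    exact (isCoprime_zero_right.mp h).ne_zero
  set N : ZMod p := (n : ZMod p) with hNdef
  set K : ZMod p := (k : ZMod p) with hKdef
  set A : Finset (ZMod p) := univ.filter (fun x : ZMod p => x ≠ 0) with hA
  have hmemA : ∀ x : ZMod p, x ∈ A ↔ x ≠ 0 := by
    intro x; rw [hA, mem_filter]; simp
  have habs : ∀ z : ℂ, ((‖z‖ : ℂ)) ^ 2 = z * (starRingEnd ℂ) z := by
    intro z
    rw [Complex.mul_conj]
    norm_cast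
    exact Complex.sq_norm z
  set G2 : ℂ := gaussSum' p (fun a => (starRingEnd ℂ) (ψ a) ^ 2) with hG2
  -- inner m-sums
  set Gm : ZMod p → ZMod p → ℂ :=
    fun a b => ∑ m ∈ A, ψ m * (χ (m * a + b) * (starRingEnd ℂ) (χ (m * b + a))) with hGm
  set g3 : ZMod p → ℂ :=
    fun c => ∑ m ∈ A, ψ m * (χ (m + c) * (starRingEnd ℂ) (χ (m * c + 1))) with hg3
  set hh : ZMod p → ℂ :=
    fun a => ∑ m ∈ A, ψ m * (χ (m * a + 1) * (starRingEnd ℂ) (χ (m + a))) with hhh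
  -- Step 1: expand |·|²
  have step1 : ∑ m ∈ A, ψ m * ‖∑ a ∈ A, χ (m * a + N * a⁻¹) * e p (K * a)‖ ^ 2
      = ∑ m ∈ A, ∑ a ∈ A, ∑ b ∈ A,
          ψ m * (χ (m * a + N * a⁻¹) * (starRingEnd ℂ) (χ (m * b + N * b⁻¹)))
            * (e p (K * a) * e p (-(K * b))) := by
    apply Finset.sum_congr rfl
    intro m _
    rw [habs, map_sum, Finset.sum_mul_sum, Finset.mul_sum]
    apply Finset.sum_congr rfl
    intro a _
    rw [Finset.mul_sum]
    apply Finset.sum_congr rfl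
    intro b _
    rw [map_mul, e_conj]
    ring
  -- Step 2: substitute m → N (ab)⁻¹ m
  have step2 : ∀ a ∈ A, ∀ b ∈ A,
      ∑ m ∈ A, ψ m * (χ (m * a + N * a⁻¹) * (starRingEnd ℂ) (χ (m * b + N * b⁻¹)))
      = ψ N * (((starRingEnd ℂ) (ψ a) * (starRingEnd ℂ) (ψ b)) * Gm a b) := by
    intro a ha b hb
    rw [hmemA] at ha hb
    set c : ZMod p := N * (a⁻¹ * b⁻¹) with hc
    have hc0 : c ≠ 0 := mul_ne_zero hN (mul_ne_zero (inv_ne_zero ha) (inv_ne_zero hb))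
    rw [← sum_A_mul c hc0
      (fun m => ψ m * (χ (m * a + N * a⁻¹) * (starRingEnd ℂ) (χ (m * b + N * b⁻¹))))]
    have hper : ∀ m ∈ A, ψ (c * m) * (χ (c * m * a + N * a⁻¹)
          * (starRingEnd ℂ) (χ (c * m * b + N * b⁻¹)))
        = ψ N * (((starRingEnd ℂ) (ψ a) * (starRingEnd ℂ) (ψ b))
            * (ψ m * (χ (m * a + b) * (starRingEnd ℂ) (χ (m * b + a))))) := by
      intro m _
      have e1 : c * m * a + N * a⁻¹ = c * (m * a + b) := by
        rw [hc]; field_simp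
      have e2 : c * m * b + N * b⁻¹ = c * (m * b + a) := by
        rw [hc]; field_simp
      have e3 : ψ c = ψ N * ((starRingEnd ℂ) (ψ a) * (starRingEnd ℂ) (ψ b)) := by
        rw [hc, map_mul, map_mul, ← char_conj' ψ a, ← char_conj' ψ b]
      rw [e1, e2]
      rw [show χ (c * (m * a + b)) = χ c * χ (m * a + b) from map_mul χ _ _]
      rw [show (starRingEnd ℂ) (χ (c * (m * b + a)))
          = (starRingEnd ℂ) (χ c) * (starRingEnd ℂ) (χ (m * b + a)) from by
        rw [map_mul χ, map_mul]]
      rw [show ψ (c * m) = ψ c * ψ m from map_mul ψ _ _, e3]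
      have hcc := char_mul_conj χ hc0
      linear_combination (ψ N * ((starRingEnd ℂ) (ψ a) * (starRingEnd ℂ) (ψ b)) * ψ m
        * (χ (m * a + b) * (starRingEnd ℂ) (χ (m * b + a)))) * hcc
    rw [Finset.sum_congr rfl hper, hGm]
    simp only [← Finset.mul_sum]
  -- Step 3: inner c-sum identity : Gm a (a*c) = g3 c
  have step3 : ∀ a, a ≠ 0 → ∀ c, Gm a (a * c) = g3 c := by
    intro a ha c
    rw [hGm, hg3]
    apply Finset.sum_congr rfl
    intro m _
    have e1 : m * a + a * c = a * (m + c) := by ring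
    have e2 : m * (a * c) + a = a * (m * c + 1) := by ring
    rw [e1, e2, map_mul χ, map_mul χ, map_mul (starRingEnd ℂ)]
    have hcc := char_mul_conj χ ha
    linear_combination (ψ m * (χ (m + c) * (starRingEnd ℂ) (χ (m * c + 1)))) * hcc
  -- Step 4: substitute b → a * c
  have step4 : ∀ a ∈ A,
      ∑ b ∈ A, ψ N * (((starRingEnd ℂ) (ψ a) * (starRingEnd ℂ) (ψ b)) * Gm a b)
          * (e p (K * a) * e p (-(K * b)))
      = ∑ c ∈ A, (ψ N * ((starRingEnd ℂ) (ψ c) * g3 c))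
          * (((starRingEnd ℂ) (ψ a) * (starRingEnd ℂ) (ψ a)) * e p ((K * (1 - c)) * a)) := by
    intro a ha
    rw [hmemA] at ha
    rw [← sum_A_mul a ha (fun b => ψ N * (((starRingEnd ℂ) (ψ a) * (starRingEnd ℂ) (ψ b)) * Gm a b)
          * (e p (K * a) * e p (-(K * b))))]
    apply Finset.sum_congr rfl
    intro c _
    rw [step3 a ha c]
    rw [show (starRingEnd ℂ) (ψ (a * c)) = (starRingEnd ℂ) (ψ a) * (starRingEnd ℂ) (ψ c) from by
      rw [map_mul ψ, map_mul]]
    rw [show e p (K * a) * e p (-(K * (a * c))) = e p ((K * (1 - c)) * a) from by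
      rw [e_mul]; congr 1; ring]
    ring
  -- Step 5: evaluate inner a-sum via twisted Gauss sum
  have step5 : ∀ c ∈ A,
      ∑ a ∈ A, (ψ N * ((starRingEnd ℂ) (ψ c) * g3 c))
          * (((starRingEnd ℂ) (ψ a) * (starRingEnd ℂ) (ψ a)) * e p ((K * (1 - c)) * a))
      = (ψ N * ((starRingEnd ℂ) (ψ c) * g3 c)) * (ψ (K * (1 - c)) ^ 2 * G2) := by
    intro c _
    rw [← Finset.mul_sum]
    congr 1
    exact inner_gauss ψ hψ2 (K * (1 - c))
  -- Step 7: substitute c → a⁻¹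
  have step7 : ∑ c ∈ A, (starRingEnd ℂ) (ψ c) * ψ (c - 1) ^ 2 * g3 c
      = ∑ a ∈ A, (starRingEnd ℂ) (ψ a) * ψ (a - 1) ^ 2 * hh a := by
    rw [← sum_A_inv (fun c => (starRingEnd ℂ) (ψ c) * ψ (c - 1) ^ 2 * g3 c)]
    apply Finset.sum_congr rfl
    intro a ha
    rw [hmemA] at ha
    have hg : g3 a⁻¹ = hh a := by
      rw [hg3, hhh]
      apply Finset.sum_congr rfl
      intro m _
      have e1 : m + a⁻¹ = a⁻¹ * (m * a + 1) := by field_simp; try ring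
      have e2 : m * a⁻¹ + 1 = a⁻¹ * (m + a) := by field_simp; try ring
      rw [e1, e2]
      rw [show χ (a⁻¹ * (m * a + 1)) = χ a⁻¹ * χ (m * a + 1) from map_mul χ _ _]
      rw [show (starRingEnd ℂ) (χ (a⁻¹ * (m + a)))
          = (starRingEnd ℂ) (χ a⁻¹) * (starRingEnd ℂ) (χ (m + a)) from by
        rw [map_mul χ, map_mul]]
      have hcc := char_mul_conj χ (inv_ne_zero ha)
      linear_combination (ψ m * (χ (m * a + 1) * (starRingEnd ℂ) (χ (m + a)))) * hcc
    rw [hg, char_conj_inv]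
    rw [show a⁻¹ - 1 = a⁻¹ * (-1 * (a - 1)) from by field_simp; try ring]
    rw [show ψ (a⁻¹ * (-1 * (a - 1))) = ψ a⁻¹ * (ψ (-1) * ψ (a - 1)) from by
      rw [map_mul ψ, map_mul ψ]]
    rw [← char_conj' ψ a]
    have hua := char_mul_conj ψ ha
    have hw := psi_negone_sq ψ
    linear_combination ((starRingEnd ℂ) (ψ a) ^ 2 * ψ (a - 1) ^ 2 * hh a * ψ a) * hw
      + ((starRingEnd ℂ) (ψ a) * ψ (a - 1) ^ 2 * hh a) * hua
  -- Step 8: apply lemB and reorganize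
  have step8 : ∑ a ∈ A, (starRingEnd ℂ) (ψ a) * ψ (a - 1) ^ 2 * hh a
      = ψ (-1) * ∑ u ∈ A, (starRingEnd ℂ) (χ u) *
          ∑ a ∈ A, (starRingEnd ℂ) (ψ (u * a - 1)) * ψ (u * a⁻¹ - 1) * ψ (a - 1) ^ 2 := by
    have hl : ∀ a ∈ A, (starRingEnd ℂ) (ψ a) * ψ (a - 1) ^ 2 * hh a
        = ∑ u ∈ A, ψ (-1) * ((starRingEnd ℂ) (χ u) *
            ((starRingEnd ℂ) (ψ (u * a - 1)) * ψ (u * a⁻¹ - 1) * ψ (a - 1) ^ 2)) := by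
      intro a ha
      rw [hmemA] at ha
      have hB := lemB χ ψ hχ hψ hp ha
      have hhB : hh a = ψ (-1) * ∑ u ∈ A, (starRingEnd ℂ) (χ u) *
          ((starRingEnd ℂ) (ψ (u * a - 1)) * ψ (u - a)) := hB
      rw [hhB, Finset.mul_sum, Finset.mul_sum]
      apply Finset.sum_congr rfl
      intro u _
      rw [show u * a⁻¹ - 1 = a⁻¹ * (u - a) from by field_simp; try ring]
      rw [show ψ (a⁻¹ * (u - a)) = ψ a⁻¹ * ψ (u - a) from map_mul ψ _ _]
      rw [← char_conj' ψ a]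
      ring
    calc ∑ a ∈ A, (starRingEnd ℂ) (ψ a) * ψ (a - 1) ^ 2 * hh a
        = ∑ a ∈ A, ∑ u ∈ A, ψ (-1) * ((starRingEnd ℂ) (χ u) *
            ((starRingEnd ℂ) (ψ (u * a - 1)) * ψ (u * a⁻¹ - 1) * ψ (a - 1) ^ 2)) :=
          Finset.sum_congr rfl hl
      _ = ∑ u ∈ A, ∑ a ∈ A, ψ (-1) * ((starRingEnd ℂ) (χ u) *
            ((starRingEnd ℂ) (ψ (u * a - 1)) * ψ (u * a⁻¹ - 1) * ψ (a - 1) ^ 2)) :=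
          Finset.sum_comm
      _ = ψ (-1) * ∑ u ∈ A, (starRingEnd ℂ) (χ u) *
            ∑ a ∈ A, (starRingEnd ℂ) (ψ (u * a - 1)) * ψ (u * a⁻¹ - 1) * ψ (a - 1) ^ 2 := by
          rw [Finset.mul_sum]
          apply Finset.sum_congr rfl
          intro u _
          rw [← Finset.mul_sum, ← Finset.mul_sum]
  -- Assemble everything
  set SS : ℂ := ∑ u ∈ A, (starRingEnd ℂ) (χ u) *
      ∑ a ∈ A, (starRingEnd ℂ) (ψ (u * a - 1)) * ψ (u * a⁻¹ - 1) * ψ (a - 1) ^ 2 with hSS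
  have main : ∑ m ∈ A, ψ m * ‖∑ a ∈ A, χ (m * a + N * a⁻¹) * e p (K * a)‖ ^ 2
      = (ψ N * ψ K ^ 2 * G2) * (ψ (-1) * SS) := by
    rw [step1]
    calc ∑ m ∈ A, ∑ a ∈ A, ∑ b ∈ A,
            ψ m * (χ (m * a + N * a⁻¹) * (starRingEnd ℂ) (χ (m * b + N * b⁻¹)))
              * (e p (K * a) * e p (-(K * b)))
        = ∑ a ∈ A, ∑ m ∈ A, ∑ b ∈ A,
            ψ m * (χ (m * a + N * a⁻¹) * (starRingEnd ℂ) (χ (m * b + N * b⁻¹)))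
              * (e p (K * a) * e p (-(K * b))) := Finset.sum_comm
      _ = ∑ a ∈ A, ∑ b ∈ A, ∑ m ∈ A,
            ψ m * (χ (m * a + N * a⁻¹) * (starRingEnd ℂ) (χ (m * b + N * b⁻¹)))
              * (e p (K * a) * e p (-(K * b))) :=
          Finset.sum_congr rfl (fun a _ => Finset.sum_comm)
      _ = ∑ a ∈ A, ∑ b ∈ A,
            ψ N * (((starRingEnd ℂ) (ψ a) * (starRingEnd ℂ) (ψ b)) * Gm a b)
              * (e p (K * a) * e p (-(K * b))) := by
          apply Finset.sum_congr rfl; intro a ha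
          apply Finset.sum_congr rfl; intro b hb
          rw [← Finset.sum_mul, step2 a ha b hb]
      _ = ∑ a ∈ A, ∑ c ∈ A, (ψ N * ((starRingEnd ℂ) (ψ c) * g3 c))
              * (((starRingEnd ℂ) (ψ a) * (starRingEnd ℂ) (ψ a)) * e p ((K * (1 - c)) * a)) := by
          exact Finset.sum_congr rfl (fun a ha => step4 a ha)
      _ = ∑ c ∈ A, ∑ a ∈ A, (ψ N * ((starRingEnd ℂ) (ψ c) * g3 c))
              * (((starRingEnd ℂ) (ψ a) * (starRingEnd ℂ) (ψ a)) * e p ((K * (1 - c)) * a)) :=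
          Finset.sum_comm
      _ = ∑ c ∈ A, (ψ N * ((starRingEnd ℂ) (ψ c) * g3 c)) * (ψ (K * (1 - c)) ^ 2 * G2) :=
          Finset.sum_congr rfl (fun c hc => step5 c hc)
      _ = ∑ c ∈ A, (ψ N * ψ K ^ 2 * G2) * ((starRingEnd ℂ) (ψ c) * ψ (c - 1) ^ 2 * g3 c) := by
          apply Finset.sum_congr rfl
          intro c _
          rw [show K * (1 - c) = K * (-1 * (c - 1)) from by ring]
          rw [show ψ (K * (-1 * (c - 1))) = ψ K * (ψ (-1) * ψ (c - 1)) from by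
            rw [map_mul ψ, map_mul ψ]]
          have hw := psi_negone_sq ψ
          linear_combination (ψ N * (starRingEnd ℂ) (ψ c) * g3 c * ψ K ^ 2 * ψ (c - 1) ^ 2 * G2)
            * hw
      _ = (ψ N * ψ K ^ 2 * G2) * ∑ c ∈ A, (starRingEnd ℂ) (ψ c) * ψ (c - 1) ^ 2 * g3 c := by
          rw [← Finset.mul_sum]
      _ = (ψ N * ψ K ^ 2 * G2) * (ψ (-1) * SS) := by rw [step7, step8, hSS]
  rw [main]
  have hcast : ψ (((n * k ^ 2 : ℤ) : ZMod p)) = ψ N * ψ K ^ 2 := by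
    have : ((n * k ^ 2 : ℤ) : ZMod p) = N * (K * K) := by
      rw [hNdef, hKdef]; push_cast; ring
    rw [this, map_mul, map_mul, sq]
  have hgauss := char_gauss_mul ψ hψ
  have hp0 : (p : ℂ) ≠ 0 := Nat.cast_ne_zero.mpr (Nat.Prime.ne_zero Fact.out)
  rw [hcast]
  rw [div_mul_eq_mul_div, eq_div_iff hp0]
  linear_combination (-(ψ N * ψ K ^ 2 * G2 * SS)) * hgauss

theorem stmt_13_aux (p : ℕ) [Fact p.Prime] (hp : 3 < p) (n k : ℤ)
    (hn : IsCoprime n (p : ℤ)) (hk : IsCoprime k (p : ℤ))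
    (χ ψ : DirichletCharacter ℂ p) (hχ : χ ≠ 1) (hψ : ψ ≠ 1) (hψ2 : ψ ^ 2 ≠ 1) :
    ∑ m ∈ univ.filter (fun m : ZMod p => m ≠ 0),
      ψ m * ‖∑ a ∈ univ.filter (fun a : ZMod p => a ≠ 0),
        χ ((m : ZMod p) * a + (n : ZMod p) * a⁻¹) * e p ((k : ZMod p) * a)‖ ^ 2
      = ψ ((n * k ^ 2 : ℤ) : ZMod p) * gaussSum' p ψ
          * gaussSum' p (fun a => (starRingEnd ℂ) (ψ a))
          * gaussSum' p (fun a => (starRingEnd ℂ) (ψ a) ^ 2) / p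
          * ∑ u ∈ univ.filter (fun u : ZMod p => u ≠ 0),
              (starRingEnd ℂ) (χ u) *
                ∑ a ∈ univ.filter (fun a : ZMod p => a ≠ 0),
                  (starRingEnd ℂ) (ψ (u * a - 1)) * ψ (u * a⁻¹ - 1) * ψ (a - 1) ^ 2 :=
  stmt_13' hp n k hn hk χ ψ hχ hψ hψ2

end main


theorem stmt_13 (p : ℕ) [Fact p.Prime] (hp : 3 < p) (n k : ℤ)
    (hn : IsCoprime n (p : ℤ)) (hk : IsCoprime k (p : ℤ))
    (χ ψ : DirichletCharacter ℂ p) (hχ : χ ≠ 1) (hψ : ψ ≠ 1) (hψ2 : ψ ^ 2 ≠ 1) :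
    ∑ m ∈ univ.filter (fun m : ZMod p => m ≠ 0),
      ψ m * ‖∑ a ∈ univ.filter (fun a : ZMod p => a ≠ 0),
        χ ((m : ZMod p) * a + (n : ZMod p) * a⁻¹) * e p ((k : ZMod p) * a)‖ ^ 2
      = ψ ((n * k ^ 2 : ℤ) : ZMod p) * gaussSum' p ψ
          * gaussSum' p (fun a => (starRingEnd ℂ) (ψ a))
          * gaussSum' p (fun a => (starRingEnd ℂ) (ψ a) ^ 2) / p
          * ∑ u ∈ univ.filter (fun u : ZMod p => u ≠ 0),
              (starRingEnd ℂ) (χ u) *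
                ∑ a ∈ univ.filter (fun a : ZMod p => a ≠ 0),
                  (starRingEnd ℂ) (ψ (u * a - 1)) * ψ (u * a⁻¹ - 1) * ψ (a - 1) ^ 2 := by
  exact stmt_13_aux p hp n k hn hk χ ψ hχ hψ hψ2
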